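/- Over a unital ring, the Toeplitz-type algebra identity holds: the set $\mathcal T$ of $\mathbb N\times\mathbb N$ matrices of the form $\mathsf W(a)+p$, where $a$ ranges over Laurent polynomials and $p$ over matrices with finitely many nonzero entries, is closed under matrix multiplication, with product $(\mathsf W(a)+p)(\mathsf W(b)+q)=\mathsf W(ab)+\big(-\mathsf U^{+-}(a)\mathsf U^{-+}(b)+\mathsf W(a)q+p\mathsf W(b)+pq\big)$, and the decomposition $\mathsf W(a)+p$ ($a$ Laurent polynomial, $p$ finite) is unique. Hence the symbol map $\sigma(\mathsf W(a)+p)=a$ is a well-defined surjective ring homomorphism from $\mathcal T$ onto the Laurent polynomial ring, with kernel the finite matrices. -/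

import Mathlib

open Function

lemma conv_split {R : Type*} [Ring R] (a b : ℤ → R) (ha : (support a).Finite)
    (i k : ℕ) :
    ∑ᶠ j : ℤ, a j * b ((i : ℤ) - k - j) =
      (∑ᶠ n : ℕ, a ((i : ℤ) - n) * b ((n : ℤ) - k)) +
        ∑ᶠ n : ℕ, a ((i : ℤ) + 1 + n) * b (-1 - (n : ℤ) - k) := by
  set f : ℤ → R := fun j => a j * b ((i : ℤ) - k - j) with hf
  have hsupp : support f ⊆ support a := fun j hj ha0 => hj (by simp [hf, ha0])
  have hcover : (Set.univ : Set ℤ) =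
      Set.range (fun n : ℕ => (i : ℤ) - n) ∪ Set.range (fun n : ℕ => (i : ℤ) + 1 + n) := by
    ext z
    simp only [Set.mem_univ, Set.mem_union, Set.mem_range, true_iff]
    rcases le_or_gt z (i : ℤ) with h | h
    · exact Or.inl ⟨((i : ℤ) - z).toNat, by omega⟩
    · exact Or.inr ⟨(z - (i : ℤ) - 1).toNat, by omega⟩
  have hdisj : Disjoint (Set.range (fun n : ℕ => (i : ℤ) - n))
      (Set.range (fun n : ℕ => (i : ℤ) + 1 + n)) := by
    rw [Set.disjoint_left]
    rintro z ⟨n, hn⟩ ⟨m, hm⟩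
    simp only at hn hm
    omega
  have hinj1 : Injective (fun n : ℕ => (i : ℤ) - n) := by
    intro n m h; simp only at h; omega
  have hinj2 : Injective (fun n : ℕ => (i : ℤ) + 1 + n) := by
    intro n m h; simp only at h; omega
  calc ∑ᶠ j : ℤ, f j = ∑ᶠ j ∈ (Set.univ : Set ℤ), f j := (finsum_mem_univ f).symm
    _ = ∑ᶠ j ∈ (Set.range (fun n : ℕ => (i : ℤ) - n) ∪
          Set.range (fun n : ℕ => (i : ℤ) + 1 + n)), f j := by rw [← hcover]
    _ = (∑ᶠ j ∈ Set.range (fun n : ℕ => (i : ℤ) - n), f j) +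
          ∑ᶠ j ∈ Set.range (fun n : ℕ => (i : ℤ) + 1 + n), f j := by
        refine finsum_mem_union' hdisj ?_ ?_ <;>
          exact ha.subset (fun z hz => hsupp hz.2)
    _ = (∑ᶠ n : ℕ, f ((i : ℤ) - n)) + ∑ᶠ n : ℕ, f ((i : ℤ) + 1 + n) := by
        rw [finsum_mem_range hinj1, finsum_mem_range hinj2]
    _ = _ := by
        congr 1 <;> refine finsum_congr fun n => ?_ <;> simp only [hf] <;>
          congr 2 <;> omega

/-- The algebraic Toeplitz algebra: matrices `𝖶(a) + p` with `a` a Laurent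
polynomial (`𝖶(a)_{i,j} = a(i-j)`) and `p` a matrix with finitely many nonzero
entries. It is closed under multiplication, with
`(𝖶(a)+p)(𝖶(b)+q) = 𝖶(ab) + (-𝖴⁺⁻(a)𝖴⁻⁺(b) + 𝖶(a)q + p𝖶(b) + pq)`,
the perturbation part is again a finite matrix, and the decomposition
`𝖶(a) + p` is unique; hence the symbol map `𝖶(a)+p ↦ a` is a well-defined
ring homomorphism with kernel the finite matrices. -/
theorem toeplitz_algebra_structure {R : Type*} [Ring R]
    (a b : ℤ → R) (p q : ℕ → ℕ → R)
    (ha : (support a).Finite) (hb : (support b).Finite)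
    (hp : Set.Finite (support fun x : ℕ × ℕ => p x.1 x.2))
    (hq : Set.Finite (support fun x : ℕ × ℕ => q x.1 x.2)) :
    -- product formula
    (∀ i k : ℕ,
      ∑ᶠ j : ℕ, (a ((i : ℤ) - j) + p i j) * (b ((j : ℤ) - k) + q j k) =
        (∑ᶠ j : ℤ, a j * b ((i : ℤ) - k - j)) +
          (-(∑ᶠ j : ℕ, a ((i : ℤ) + 1 + j) * b (-1 - (j : ℤ) - k)) +
            (∑ᶠ j : ℕ, a ((i : ℤ) - j) * q j k) +
            (∑ᶠ j : ℕ, p i j * b ((j : ℤ) - k)) +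
            ∑ᶠ j : ℕ, p i j * q j k)) ∧
    -- the perturbation part of the product is a finite matrix
    Set.Finite (support fun x : ℕ × ℕ =>
      -(∑ᶠ j : ℕ, a ((x.1 : ℤ) + 1 + j) * b (-1 - (j : ℤ) - x.2)) +
        (∑ᶠ j : ℕ, a ((x.1 : ℤ) - j) * q j x.2) +
        (∑ᶠ j : ℕ, p x.1 j * b ((j : ℤ) - x.2)) +
        ∑ᶠ j : ℕ, p x.1 j * q j x.2) ∧
    -- uniqueness of the decomposition `𝖶(a) + p`
    (∀ (a' : ℤ → R) (p' : ℕ → ℕ → R), (support a').Finite →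
      Set.Finite (support fun x : ℕ × ℕ => p' x.1 x.2) →
      (∀ i j : ℕ, a ((i : ℤ) - j) + p i j = a' ((i : ℤ) - j) + p' i j) →
      a = a' ∧ p = p') := by 
  classical
  -- finiteness helpers
  have supp_comp : ∀ (f : ℕ → ℤ), Injective f →
      (support fun j : ℕ => a (f j)).Finite := by
    intro f hf
    exact (ha.preimage hf.injOn).subset fun j hj => hj
  have supp_compb : ∀ (f : ℕ → ℤ), Injective f →
      (support fun j : ℕ => b (f j)).Finite := by
    intro f hf
    exact (hb.preimage hf.injOn).subset fun j hj => hj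
  have hrow_p : ∀ i : ℕ, (support fun j : ℕ => p i j).Finite := by
    intro i
    have hinj : Injective (fun j : ℕ => ((i, j) : ℕ × ℕ)) := by
      intro x y h; simpa using h
    exact (hp.preimage hinj.injOn).subset fun j hj => hj
  have hcol_q : ∀ k : ℕ, (support fun j : ℕ => q j k).Finite := by
    intro k
    have hinj : Injective (fun j : ℕ => ((j, k) : ℕ × ℕ)) := by
      intro x y h; simpa using h
    exact (hq.preimage hinj.injOn).subset fun j hj => hj
  have hinjsub : ∀ i : ℕ, Injective (fun j : ℕ => (i : ℤ) - j) := by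
    intro i n m h; simp only at h; omega
  -- bounds
  obtain ⟨Na, hNa⟩ := ha.bddAbove
  obtain ⟨Mb, hMb⟩ := hb.bddBelow
  obtain ⟨Rp, hRp⟩ := (hp.image Prod.fst).bddAbove
  obtain ⟨Cp, hCp⟩ := (hp.image Prod.snd).bddAbove
  obtain ⟨Rq, hRq⟩ := (hq.image Prod.fst).bddAbove
  obtain ⟨Cq, hCq⟩ := (hq.image Prod.snd).bddAbove
  have hpr : ∀ i j : ℕ, p i j ≠ 0 → i ≤ Rp ∧ j ≤ Cp := by
    intro i j hne
    exact ⟨hRp ⟨(i, j), hne, rfl⟩, hCp ⟨(i, j), hne, rfl⟩⟩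
  have hqr : ∀ i j : ℕ, q i j ≠ 0 → i ≤ Rq ∧ j ≤ Cq := by
    intro i j hne
    exact ⟨hRq ⟨(i, j), hne, rfl⟩, hCq ⟨(i, j), hne, rfl⟩⟩
  -- support bounds for the four perturbation terms
  have hsub1 : support (fun x : ℕ × ℕ =>
      ∑ᶠ j : ℕ, a ((x.1 : ℤ) + 1 + j) * b (-1 - (j : ℤ) - x.2)) ⊆
      Set.Iic Na.toNat ×ˢ Set.Iic (-1 - Mb).toNat := by
    rintro ⟨i, k⟩ hx
    obtain ⟨j, hj⟩ : ∃ j : ℕ, a ((i : ℤ) + 1 + j) * b (-1 - (j : ℤ) - k) ≠ 0 := by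
      by_contra hc
      push_neg at hc
      exact hx (finsum_eq_zero_of_forall_eq_zero hc)
    have h1 := hNa (left_ne_zero_of_mul hj)
    have h2 := hMb (right_ne_zero_of_mul hj)
    constructor <;> simp only [Set.mem_Iic] <;> omega
  have hsub2 : support (fun x : ℕ × ℕ =>
      ∑ᶠ j : ℕ, a ((x.1 : ℤ) - j) * q j x.2) ⊆
      Set.Iic (Na.toNat + Rq) ×ˢ Set.Iic Cq := by
    rintro ⟨i, k⟩ hx
    obtain ⟨j, hj⟩ : ∃ j : ℕ, a ((i : ℤ) - j) * q j k ≠ 0 := by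
      by_contra hc
      push_neg at hc
      exact hx (finsum_eq_zero_of_forall_eq_zero hc)
    have h1 := hNa (left_ne_zero_of_mul hj)
    have h2 := hqr _ _ (right_ne_zero_of_mul hj)
    constructor <;> simp only [Set.mem_Iic] <;> omega
  have hsub3 : support (fun x : ℕ × ℕ =>
      ∑ᶠ j : ℕ, p x.1 j * b ((j : ℤ) - x.2)) ⊆
      Set.Iic Rp ×ˢ Set.Iic (Cp + (-Mb).toNat) := by
    rintro ⟨i, k⟩ hx
    obtain ⟨j, hj⟩ : ∃ j : ℕ, p i j * b ((j : ℤ) - k) ≠ 0 := by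
      by_contra hc
      push_neg at hc
      exact hx (finsum_eq_zero_of_forall_eq_zero hc)
    have h1 := hpr _ _ (left_ne_zero_of_mul hj)
    have h2 := hMb (right_ne_zero_of_mul hj)
    constructor <;> simp only [Set.mem_Iic] <;> omega
  have hsub4 : support (fun x : ℕ × ℕ =>
      ∑ᶠ j : ℕ, p x.1 j * q j x.2) ⊆ Set.Iic Rp ×ˢ Set.Iic Cq := by
    rintro ⟨i, k⟩ hx
    obtain ⟨j, hj⟩ : ∃ j : ℕ, p i j * q j k ≠ 0 := by
      by_contra hc
      push_neg at hc
      exact hx (finsum_eq_zero_of_forall_eq_zero hc)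
    have h1 := hpr _ _ (left_ne_zero_of_mul hj)
    have h2 := hqr _ _ (right_ne_zero_of_mul hj)
    constructor <;> simp only [Set.mem_Iic] <;> omega
  refine ⟨?_, ?_, ?_⟩
  · -- product formula
    intro i k
    have hA : (support fun j : ℕ => a ((i : ℤ) - j) * b ((j : ℤ) - k)).Finite :=
      (supp_comp _ (hinjsub i)).subset fun j hj h0 => hj (by simp [h0])
    have hB : (support fun j : ℕ => a ((i : ℤ) - j) * q j k).Finite :=
      (supp_comp _ (hinjsub i)).subset fun j hj h0 => hj (by simp [h0])
    have hC : (support fun j : ℕ => p i j * b ((j : ℤ) - k)).Finite :=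
      (hrow_p i).subset fun j hj h0 => hj (by simp [h0])
    have hD : (support fun j : ℕ => p i j * q j k).Finite :=
      (hrow_p i).subset fun j hj h0 => hj (by simp [h0])
    have hCD : (support fun j : ℕ =>
        p i j * b ((j : ℤ) - k) + p i j * q j k).Finite :=
      (hC.union hD).subset (Function.support_add _ _)
    have hBCD : (support fun j : ℕ =>
        a ((i : ℤ) - j) * q j k + (p i j * b ((j : ℤ) - k) + p i j * q j k)).Finite :=
      (hB.union hCD).subset (Function.support_add _ _)
    have key := conv_split a b ha i k
    calc ∑ᶠ j : ℕ, (a ((i : ℤ) - j) + p i j) * (b ((j : ℤ) - k) + q j k)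
        = ∑ᶠ j : ℕ, (a ((i : ℤ) - j) * b ((j : ℤ) - k) +
            (a ((i : ℤ) - j) * q j k +
              (p i j * b ((j : ℤ) - k) + p i j * q j k))) :=
          finsum_congr fun j => by noncomm_ring
      _ = (∑ᶠ j : ℕ, a ((i : ℤ) - j) * b ((j : ℤ) - k)) +
            ∑ᶠ j : ℕ, (a ((i : ℤ) - j) * q j k +
              (p i j * b ((j : ℤ) - k) + p i j * q j k)) :=
          finsum_add_distrib hA hBCD
      _ = (∑ᶠ j : ℕ, a ((i : ℤ) - j) * b ((j : ℤ) - k)) +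
            ((∑ᶠ j : ℕ, a ((i : ℤ) - j) * q j k) +
              ∑ᶠ j : ℕ, (p i j * b ((j : ℤ) - k) + p i j * q j k)) := by
          rw [finsum_add_distrib hB hCD]
      _ = (∑ᶠ j : ℕ, a ((i : ℤ) - j) * b ((j : ℤ) - k)) +
            ((∑ᶠ j : ℕ, a ((i : ℤ) - j) * q j k) +
              ((∑ᶠ j : ℕ, p i j * b ((j : ℤ) - k)) +
                ∑ᶠ j : ℕ, p i j * q j k)) := by
          rw [finsum_add_distrib hC hD]
      _ = _ := by rw [key]; abel
  · -- finiteness of the perturbation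
    have hfin : ((Set.Iic Na.toNat ×ˢ Set.Iic (-1 - Mb).toNat ∪
        Set.Iic (Na.toNat + Rq) ×ˢ Set.Iic Cq) ∪
        Set.Iic Rp ×ˢ Set.Iic (Cp + (-Mb).toNat) ∪
        Set.Iic Rp ×ˢ Set.Iic Cq : Set (ℕ × ℕ)).Finite := by
      refine Set.Finite.union (Set.Finite.union (Set.Finite.union ?_ ?_) ?_) ?_ <;>
        exact (Set.finite_Iic _).prod (Set.finite_Iic _)
    refine hfin.subset ?_
    rintro x hx
    by_contra hc
    simp only [Set.mem_union, not_or] at hc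
    obtain ⟨⟨⟨hc1, hc2⟩, hc3⟩, hc4⟩ := hc
    apply hx
    have e1 : (∑ᶠ j : ℕ, a ((x.1 : ℤ) + 1 + j) * b (-1 - (j : ℤ) - x.2)) = 0 := by
      by_contra h0; exact hc1 (hsub1 h0)
    have e2 : (∑ᶠ j : ℕ, a ((x.1 : ℤ) - j) * q j x.2) = 0 := by
      by_contra h0; exact hc2 (hsub2 h0)
    have e3 : (∑ᶠ j : ℕ, p x.1 j * b ((j : ℤ) - x.2)) = 0 := by
      by_contra h0; exact hc3 (hsub3 h0)
    have e4 : (∑ᶠ j : ℕ, p x.1 j * q j x.2) = 0 := by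
      by_contra h0; exact hc4 (hsub4 h0)
    simp only [e1, e2, e3, e4]
    simp
  · -- uniqueness
    intro a' p' ha' hp' heq
    obtain ⟨Cp', hCp'⟩ := (hp'.image Prod.snd).bddAbove
    have hp0 : ∀ i j : ℕ, Cp < j → p i j = 0 := by
      intro i j hj
      by_contra hne
      exact absurd ((hpr i j hne).2) (by omega)
    have hp'0 : ∀ i j : ℕ, Cp' < j → p' i j = 0 := by
      intro i j hj
      by_contra hne
      have := hCp' ⟨(i, j), hne, rfl⟩
      simp only at this
      omega
    have haa' : a = a' := by
      funext n
      set j : ℕ := Cp + Cp' + n.natAbs + 1 with hjdef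
      set i : ℕ := (n + j).toNat with hidef
      have hij : (i : ℤ) - j = n := by
        simp only [hidef, hjdef]
        omega
      have := heq i j
      rw [hij, hp0 i j (by omega), hp'0 i j (by omega)] at this
      simpa using this
    refine ⟨haa', ?_⟩
    funext i j
    have := heq i j
    rw [← haa'] at this
    exact add_left_cancel this
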